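/- Let π : X → [0,∞) be measurable with ∫ π dν = 1 and let α > 1. Let D = {θ ∈ Θ : ∫ π(x)^α q_θ(x)^{1−α} ν(dx) < ∞} and for θ ∈ D define f(θ) = (1/(α−1)) · log ∫ π(x)^α q_θ(x)^{1−α} ν(dx) (the Rényi divergence RD_α(π, q_θ)). Then D is convex and the function θ ↦ f(θ) − A(θ) is convex on D; that is, f is 1-relatively strongly convex with respect to the log-partition function A. -/

import Mathlib

open MeasureTheory Real
open scoped RealInnerProductSpace ENNReal

section aux

variable {X : Type*} [MeasurableSpace X] {ν : Measure X}
variable {H : Type*} [NormedAddCommGroup H] [InnerProductSpace ℝ H] [FiniteDimensional ℝ H]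
  [MeasurableSpace H] [BorelSpace H]

lemma holder_exp {Γ : X → H} (hΓ : Measurable Γ) (w : X → ℝ≥0∞) (hw : Measurable w)
    (θ₁ θ₂ : H) {a b : ℝ} (ha : 0 ≤ a) (hb : 0 ≤ b) (hab : a + b = 1) :
    ∫⁻ x, w x * ENNReal.ofReal (exp ⟪a • θ₁ + b • θ₂, Γ x⟫) ∂ν ≤
      (∫⁻ x, w x * ENNReal.ofReal (exp ⟪θ₁, Γ x⟫) ∂ν) ^ a *
      (∫⁻ x, w x * ENNReal.ofReal (exp ⟪θ₂, Γ x⟫) ∂ν) ^ b := by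
  rcases ha.eq_or_lt with rfl | ha'
  · have hb1 : b = 1 := by linarith
    subst hb1; simp
  rcases hb.eq_or_lt with rfl | hb'
  · have ha1 : a = 1 := by linarith
    subst ha1; simp
  have ha1 : a < 1 := by linarith
  have hpq : Real.HolderConjugate (1/a) (1/b) := by
    constructor
    · rw [one_div, one_div, inv_inv, inv_inv, inv_one]; exact hab
    · positivity
    · positivity
  set F : X → ℝ≥0∞ := fun x => (w x * ENNReal.ofReal (exp ⟪θ₁, Γ x⟫)) ^ a with hF
  set G : X → ℝ≥0∞ := fun x => (w x * ENNReal.ofReal (exp ⟪θ₂, Γ x⟫)) ^ b with hG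
  have hmeas : ∀ θ : H, Measurable fun x => ENNReal.ofReal (exp ⟪θ, Γ x⟫) :=
    fun θ => ((measurable_const.inner hΓ).exp).ennreal_ofReal
  have hFmeas : AEMeasurable F ν := ((hw.mul (hmeas θ₁)).pow_const _).aemeasurable
  have hGmeas : AEMeasurable G ν := ((hw.mul (hmeas θ₂)).pow_const _).aemeasurable
  have key := ENNReal.lintegral_mul_le_Lp_mul_Lq ν hpq hFmeas hGmeas
  have hFG : ∀ x, (F * G) x = w x * ENNReal.ofReal (exp ⟪a • θ₁ + b • θ₂, Γ x⟫) := by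
    intro x
    have hinner : ⟪a • θ₁ + b • θ₂, Γ x⟫ = a * ⟪θ₁, Γ x⟫ + b * ⟪θ₂, Γ x⟫ := by
      rw [inner_add_left, real_inner_smul_left, real_inner_smul_left]
    simp only [Pi.mul_apply, hF, hG]
    rw [ENNReal.mul_rpow_of_nonneg _ _ ha, ENNReal.mul_rpow_of_nonneg _ _ hb,
      ENNReal.ofReal_rpow_of_pos (exp_pos _), ENNReal.ofReal_rpow_of_pos (exp_pos _),
      ← Real.exp_mul, ← Real.exp_mul, mul_comm ⟪θ₁, Γ x⟫ a, mul_comm ⟪θ₂, Γ x⟫ b]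
    calc w x ^ a * ENNReal.ofReal (exp (a * ⟪θ₁, Γ x⟫)) *
          (w x ^ b * ENNReal.ofReal (exp (b * ⟪θ₂, Γ x⟫)))
        = (w x ^ a * w x ^ b) *
          (ENNReal.ofReal (exp (a * ⟪θ₁, Γ x⟫)) * ENNReal.ofReal (exp (b * ⟪θ₂, Γ x⟫))) := by
          ring
      _ = w x * ENNReal.ofReal (exp ⟪a • θ₁ + b • θ₂, Γ x⟫) := by
          rw [← ENNReal.rpow_add_of_nonneg _ _ ha hb, hab, ENNReal.rpow_one,
            ← ENNReal.ofReal_mul (exp_nonneg _), ← Real.exp_add, hinner]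
  have hFa : ∀ x, F x ^ (1/a) = w x * ENNReal.ofReal (exp ⟪θ₁, Γ x⟫) := by
    intro x
    rw [hF, one_div, ENNReal.rpow_rpow_inv (ne_of_gt ha')]
  have hGb : ∀ x, G x ^ (1/b) = w x * ENNReal.ofReal (exp ⟪θ₂, Γ x⟫) := by
    intro x
    rw [hG, one_div, ENNReal.rpow_rpow_inv (ne_of_gt hb')]
  calc ∫⁻ x, w x * ENNReal.ofReal (exp ⟪a • θ₁ + b • θ₂, Γ x⟫) ∂ν
      = ∫⁻ x, (F * G) x ∂ν := by
        exact (lintegral_congr fun x => (hFG x).symm)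
    _ ≤ (∫⁻ x, F x ^ (1/a) ∂ν) ^ (1/(1/a)) * (∫⁻ x, G x ^ (1/b) ∂ν) ^ (1/(1/b)) := key
    _ = (∫⁻ x, w x * ENNReal.ofReal (exp ⟪θ₁, Γ x⟫) ∂ν) ^ a *
        (∫⁻ x, w x * ENNReal.ofReal (exp ⟪θ₂, Γ x⟫) ∂ν) ^ b := by
        rw [lintegral_congr hFa, lintegral_congr hGb, one_div_one_div, one_div_one_div]

lemma integrable_nonneg_iff {f : X → ℝ} (hf : Measurable f) (h0 : ∀ x, 0 ≤ f x) :
    Integrable f ν ↔ ∫⁻ x, ENNReal.ofReal (f x) ∂ν < ⊤ := by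
  constructor
  · intro h
    exact (hasFiniteIntegral_iff_ofReal (Filter.Eventually.of_forall h0)).mp h.2
  · intro h
    exact ⟨hf.aestronglyMeasurable, (hasFiniteIntegral_iff_ofReal
      (Filter.Eventually.of_forall h0)).mpr h⟩

end aux

/-- For a probability density `p` and `α > 1`, the effective domain
`D = {θ ∈ Θ : ∫ p^α q_θ^{1-α} dν < ∞}` of the Rényi objective `f` is convex, and `f`
is 1-relatively strongly convex with respect to `A`: `θ ↦ f θ - A θ` is convex on `D`. -/
theorem statement6
    {X : Type*} [MeasurableSpace X] (ν : Measure X) [SigmaFinite ν] (hν : ν ≠ 0)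
    {H : Type*} [NormedAddCommGroup H] [InnerProductSpace ℝ H] [FiniteDimensional ℝ H]
    [MeasurableSpace H] [BorelSpace H]
    (Γ : X → H) (hΓ : Measurable Γ)
    (Θ : Set H) (hΘ : Θ = {θ : H | Integrable (fun x => exp ⟪θ, Γ x⟫) ν})
    (A : H → ℝ) (hA : ∀ θ, A θ = log (∫ x, exp ⟪θ, Γ x⟫ ∂ν))
    (q : H → X → ℝ) (hq : ∀ θ x, q θ x = exp (⟪θ, Γ x⟫ - A θ))
    (p : X → ℝ) (hpmeas : Measurable p) (hp0 : ∀ x, 0 ≤ p x)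
    (hp1 : ∫ x, p x ∂ν = 1)
    (α : ℝ) (hα : 1 < α)
    (D : Set H)
    (hD : D = {θ ∈ Θ | Integrable (fun x => p x ^ α * q θ x ^ (1-α)) ν})
    (f : H → ℝ)
    (hf : ∀ θ, f θ = (1/(α-1)) * log (∫ x, p x ^ α * q θ x ^ (1-α) ∂ν)) :
    Convex ℝ D ∧ ConvexOn ℝ D (fun θ => f θ - A θ) := by
  have hα0 : (0:ℝ) < α := by linarith
  have hα1 : α - 1 ≠ 0 := by linarith
  have hαinv : (0:ℝ) < 1/(α-1) := one_div_pos.mpr (by linarith)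
  -- measurability facts
  have hinnermeas : ∀ θ : H, Measurable fun x => exp ⟪θ, Γ x⟫ :=
    fun θ => (measurable_const.inner hΓ).exp
  have hpα : Measurable fun x => p x ^ α :=
    (continuous_rpow_const hα0.le).measurable.comp hpmeas
  have hpα0 : ∀ x, 0 ≤ p x ^ α := fun x => Real.rpow_nonneg (hp0 x) α
  -- weight functions
  set w1 : X → ℝ≥0∞ := fun _ => 1 with hw1def
  set wp : X → ℝ≥0∞ := fun x => ENNReal.ofReal (p x ^ α) with hwpdef
  -- lintegral versions
  set K : H → ℝ≥0∞ := fun θ => ∫⁻ x, w1 x * ENNReal.ofReal (exp ⟪θ, Γ x⟫) ∂ν with hK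
  set J : H → ℝ≥0∞ := fun θ => ∫⁻ x, wp x * ENNReal.ofReal (exp ⟪θ, Γ x⟫) ∂ν with hJ
  -- pointwise identity for the Renyi integrand
  have hpt : ∀ θ x, p x ^ α * q θ x ^ (1-α) =
      exp ((α-1) * A θ) * (p x ^ α * exp ⟪(1-α) • θ, Γ x⟫) := by
    intro θ x
    rw [hq, ← Real.exp_mul, real_inner_smul_left]
    rw [← mul_assoc (exp ((α-1) * A θ)), mul_comm (exp ((α-1) * A θ)) (p x ^ α), mul_assoc,
      ← Real.exp_add]
    congr 2
    ring
  -- the auxiliary real integrand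
  have hgmeas : ∀ u : H, Measurable fun x => p x ^ α * exp ⟪u, Γ x⟫ :=
    fun u => hpα.mul (hinnermeas u)
  have hg0 : ∀ (u : H) (x : X), 0 ≤ p x ^ α * exp ⟪u, Γ x⟫ :=
    fun u x => mul_nonneg (hpα0 x) (exp_nonneg _)
  -- integrability of Renyi integrand iff J((1-α)•θ) < ∞
  have hint_iff : ∀ θ : H, Integrable (fun x => p x ^ α * q θ x ^ (1-α)) ν ↔
      J ((1-α) • θ) < ⊤ := by
    intro θ
    have h1 : Integrable (fun x => p x ^ α * q θ x ^ (1-α)) ν ↔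
        Integrable (fun x => p x ^ α * exp ⟪(1-α) • θ, Γ x⟫) ν := by
      rw [funext (hpt θ), integrable_const_mul_iff (isUnit_iff_ne_zero.mpr (exp_ne_zero _))]
    rw [h1, integrable_nonneg_iff (hgmeas _) (hg0 _)]
    have : ∀ x, ENNReal.ofReal (p x ^ α * exp ⟪(1-α) • θ, Γ x⟫) =
        wp x * ENNReal.ofReal (exp ⟪(1-α) • θ, Γ x⟫) := fun x =>
      ENNReal.ofReal_mul (hpα0 x)
    rw [lintegral_congr this]
  -- membership in Θ iff K θ < ∞
  have hΘ_iff : ∀ θ : H, θ ∈ Θ ↔ K θ < ⊤ := by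
    intro θ
    rw [hΘ]
    simp only [Set.mem_setOf_eq]
    rw [integrable_nonneg_iff (hinnermeas θ) (fun x => exp_nonneg _)]
    simp [hK, hw1def]
  -- D is convex
  have hwpmeas : Measurable wp := hpα.ennreal_ofReal
  have hDmem : ∀ θ : H, θ ∈ D ↔ K θ < ⊤ ∧ J ((1-α) • θ) < ⊤ := by
    intro θ
    rw [hD]
    simp only [Set.mem_setOf_eq, Set.mem_sep_iff]
    rw [hΘ_iff θ, hint_iff θ]
  have hDconv : Convex ℝ D := by
    intro θ₁ h₁ θ₂ h₂ a b ha hb hab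
    rw [hDmem] at h₁ h₂ ⊢
    constructor
    · have := holder_exp (ν := ν) hΓ w1 measurable_const θ₁ θ₂ ha hb hab
      refine lt_of_le_of_lt this ?_
      exact ENNReal.mul_lt_top
        (ENNReal.rpow_lt_top_of_nonneg ha h₁.1.ne)
        (ENNReal.rpow_lt_top_of_nonneg hb h₂.1.ne)
    · have hlin : (1-α) • (a • θ₁ + b • θ₂) = a • ((1-α) • θ₁) + b • ((1-α) • θ₂) := by
        rw [smul_add, smul_comm (1-α) a, smul_comm (1-α) b]
      rw [hlin]
      have := holder_exp (ν := ν) hΓ wp hwpmeas ((1-α) • θ₁) ((1-α) • θ₂) ha hb hab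
      refine lt_of_le_of_lt this ?_
      exact ENNReal.mul_lt_top
        (ENNReal.rpow_lt_top_of_nonneg ha h₁.2.ne)
        (ENNReal.rpow_lt_top_of_nonneg hb h₂.2.ne)
  -- the real auxiliary integral
  set R : H → ℝ := fun u => ∫ x, p x ^ α * exp ⟪u, Γ x⟫ ∂ν with hR
  have hR_eq : ∀ u : H, R u = (J u).toReal := by
    intro u
    simp only [hR]
    rw [integral_eq_lintegral_of_nonneg_ae (Filter.Eventually.of_forall (hg0 u))
      (hgmeas u).aestronglyMeasurable]
    congr 1
    refine lintegral_congr fun x => ?_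
    exact ENNReal.ofReal_mul (hpα0 x)
  -- integrability on D and positivity of R
  have hRint : ∀ θ ∈ D, Integrable (fun x => p x ^ α * exp ⟪(1-α) • θ, Γ x⟫) ν := by
    intro θ hθ
    rw [hDmem] at hθ
    exact (integrable_nonneg_iff (hgmeas _) (hg0 _)).mpr (by
      refine lt_of_eq_of_lt ?_ hθ.2
      refine lintegral_congr fun x => ENNReal.ofReal_mul (hpα0 x))
  have hRpos : ∀ θ ∈ D, 0 < R ((1-α) • θ) := by
    intro θ hθ
    have hint := hRint θ hθ
    rcases (integral_nonneg (f := fun x => p x ^ α * exp ⟪(1-α) • θ, Γ x⟫) (hg0 _)).eq_or_lt with heq | h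
    · exfalso
      have hzero : (fun x => p x ^ α * exp ⟪(1-α) • θ, Γ x⟫) =ᵐ[ν] 0 :=
        (integral_eq_zero_iff_of_nonneg (hg0 _) hint).mp heq.symm
      have hp_zero : p =ᵐ[ν] 0 := by
        filter_upwards [hzero] with x hx
        simp only [Pi.zero_apply] at hx ⊢
        rcases mul_eq_zero.mp hx with h | h
        · exact ((Real.rpow_eq_zero_iff_of_nonneg (hp0 x)).mp h).1
        · exact absurd h (exp_ne_zero _)
      have : ∫ x, p x ∂ν = 0 := by
        rw [integral_congr_ae hp_zero]; simp
      rw [hp1] at this; norm_num at this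
    · exact h
  -- key representation: f θ - A θ = (1/(α-1)) * log (R ((1-α)•θ)) on D
  have hrepr : ∀ θ ∈ D, f θ - A θ = (1/(α-1)) * log (R ((1-α) • θ)) := by
    intro θ hθ
    have hRposθ := hRpos θ hθ
    have hval : ∫ x, p x ^ α * q θ x ^ (1-α) ∂ν =
        exp ((α-1) * A θ) * R ((1-α) • θ) := by
      simp only [hpt, hR]
      rw [integral_const_mul]
    rw [hf, hval, Real.log_mul (exp_ne_zero _) hRposθ.ne', Real.log_exp]
    field_simp
    ring
  -- now prove convexity of f - A on D
  refine ⟨hDconv, hDconv, ?_⟩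
  intro θ₁ h₁ θ₂ h₂ a b ha hb hab
  have hc : a • θ₁ + b • θ₂ ∈ D := hDconv h₁ h₂ ha hb hab
  simp only [smul_eq_mul]
  rw [hrepr _ h₁, hrepr _ h₂, hrepr _ hc]
  have hlin : (1-α) • (a • θ₁ + b • θ₂) = a • ((1-α) • θ₁) + b • ((1-α) • θ₂) := by
    rw [smul_add, smul_comm (1-α) a, smul_comm (1-α) b]
  set u₁ := (1-α) • θ₁
  set u₂ := (1-α) • θ₂
  have hhold := holder_exp (ν := ν) hΓ wp hwpmeas u₁ u₂ ha hb hab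
  have hJ1 : J u₁ ≠ ⊤ := ((hDmem θ₁).mp h₁).2.ne
  have hJ2 : J u₂ ≠ ⊤ := ((hDmem θ₂).mp h₂).2.ne
  have hrhs_ne : (J u₁) ^ a * (J u₂) ^ b ≠ ⊤ :=
    (ENNReal.mul_lt_top (ENNReal.rpow_lt_top_of_nonneg ha hJ1)
      (ENNReal.rpow_lt_top_of_nonneg hb hJ2)).ne
  have hRle : R ((1-α) • (a • θ₁ + b • θ₂)) ≤ R u₁ ^ a * R u₂ ^ b := by
    rw [hR_eq, hR_eq, hR_eq, hlin]
    calc (J (a • u₁ + b • u₂)).toReal ≤ ((J u₁) ^ a * (J u₂) ^ b).toReal :=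
          ENNReal.toReal_mono hrhs_ne hhold
      _ = (J u₁).toReal ^ a * (J u₂).toReal ^ b := by
          rw [ENNReal.toReal_mul, ENNReal.toReal_rpow, ENNReal.toReal_rpow]
  have hR1 : 0 < R u₁ := hRpos θ₁ h₁
  have hR2 : 0 < R u₂ := hRpos θ₂ h₂
  have hRc : 0 < R ((1-α) • (a • θ₁ + b • θ₂)) := hRpos _ hc
  have hlog : log (R ((1-α) • (a • θ₁ + b • θ₂))) ≤ a * log (R u₁) + b * log (R u₂) := by
    calc log (R ((1-α) • (a • θ₁ + b • θ₂))) ≤ log (R u₁ ^ a * R u₂ ^ b) :=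
          Real.log_le_log hRc hRle
      _ = a * log (R u₁) + b * log (R u₂) := by
          rw [Real.log_mul (Real.rpow_pos_of_pos hR1 a).ne' (Real.rpow_pos_of_pos hR2 b).ne',
            Real.log_rpow hR1, Real.log_rpow hR2]
  have := mul_le_mul_of_nonneg_left hlog hαinv.le
  nlinarith [this]
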